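/- Let G^{F₁} be an (n₁,k₁,l₁,r₁)-FRC and G^{F₂} be an (n₂,k₂,l₂,r₂)-FRC with l₁,l₂,r₁,r₂ ≥ 1. Then for every integer 0 ≤ s ≤ n₁n₂, the Kronecker product satisfies err(G^{F₁} ⊗ G^{F₂}, s) = (l₁l₂/(k₁k₂))·⌊s/(r₁r₂)⌋; equivalently, err(G^{F₁} ⊗ G^{F₂}, s) = (l₁/k₁)·(l₂/k₂)·⌊s/(r₁r₂)⌋. -/

import Mathlib

open Kronecker

/-- The optimal squared decoding error of a gradient code `G` on the set `U` of
non-straggling columns: `inf_v ‖G_U v − 1‖₂²`. -/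
noncomputable def sqErr {K N : Type*} [Fintype K] (G : Matrix K N ℝ) (U : Finset N) : ℝ :=
  ⨅ v : {j // j ∈ U} → ℝ, ∑ i : K, ((∑ j ∈ U.attach, G i j.1 * v j) - 1) ^ 2

/-- The normalized worst-case squared error of a gradient code `G` with `s`
stragglers: `(1/k) · max_{|U| = n − s} inf_v ‖G_U v − 1‖₂²`. -/
noncomputable def err {K N : Type*} [Fintype K] [Fintype N]
    (G : Matrix K N ℝ) (s : ℕ) : ℝ :=
  (1 / (Fintype.card K : ℝ)) *
    ⨆ U : {U : Finset N // U.card = Fintype.card N - s}, sqErr G U.1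

/-- The `(n,k,l,r)`-FRC with `n = t·r` and `k = t·l`: the block-diagonal matrix
`I_t ⊗ J_{l×r}` with `t` diagonal copies of the `l × r` all-one matrix. -/
def FRC (t l r : ℕ) : Matrix (Fin (t * l)) (Fin (t * r)) ℝ :=
  Matrix.of fun i j => if (i : ℕ) / l = (j : ℕ) / r then 1 else 0

section helpers

lemma pack_lt {a b c d : ℕ} (ha : a < c) (hb : b < d) : a * d + b < c * d := by
  calc a * d + b < (a + 1) * d := by nlinarith
    _ ≤ c * d := Nat.mul_le_mul_right _ ha

lemma pack_div {a b d : ℕ} (hb : b < d) : (a * d + b) / d = a := by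
  rw [mul_comm, Nat.mul_add_div (by omega), Nat.div_eq_of_lt hb]
  omega

lemma pack_mod {a b d : ℕ} (hb : b < d) : (a * d + b) % d = b := by
  rw [mul_comm, Nat.mul_add_mod]
  exact Nat.mod_eq_of_lt hb

lemma pack_inj {a b a' b' d : ℕ} (hb : b < d) (hb' : b' < d)
    (h : a * d + b = a' * d + b') : a = a' ∧ b = b' := by
  have h1 : a = a' := by rw [← pack_div (a := a) hb, h, pack_div hb']
  subst h1
  exact ⟨rfl, by omega⟩

lemma sqErr_partition {K N G : Type*} [Fintype K] [DecidableEq G] [DecidableEq K]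
    (gK : K → G) (gN : N → G) (U : Finset N) :
    sqErr (Matrix.of fun i j => if gK i = gN j then (1:ℝ) else 0) U
      = ((Finset.univ.filter fun i : K => ∀ j ∈ U, gN j ≠ gK i).card : ℝ) := by
  classical
  set M : Matrix K N ℝ := Matrix.of fun i j => if gK i = gN j then (1:ℝ) else 0 with hM
  set D : Finset K := Finset.univ.filter fun i : K => ∀ j ∈ U, gN j ≠ gK i with hD
  have key : ∀ v : {j // j ∈ U} → ℝ, ∀ i ∈ D,
      ((∑ j ∈ U.attach, M i j.1 * v j) - 1) ^ 2 = 1 := by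
    intro v i hi
    have hdead : ∀ j ∈ U, gN j ≠ gK i := by
      simpa [hD] using hi
    have : ∑ j ∈ U.attach, M i j.1 * v j = 0 := by
      apply Finset.sum_eq_zero
      intro j _
      have : M i j.1 = 0 := by
        simp only [hM, Matrix.of_apply, ite_eq_right_iff]
        intro h
        exact absurd h.symm (hdead j.1 j.2)
      simp [this]
    rw [this]; norm_num
  apply le_antisymm
  · have hbdd : BddBelow (Set.range fun v : {j // j ∈ U} → ℝ =>
        ∑ i : K, ((∑ j ∈ U.attach, M i j.1 * v j) - 1) ^ 2) := by
      refine ⟨0, ?_⟩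
      rintro x ⟨v, rfl⟩
      exact Finset.sum_nonneg fun i _ => sq_nonneg _
    set v₀ : {j // j ∈ U} → ℝ := fun j => ((U.filter fun j' => gN j' = gN j.1).card : ℝ)⁻¹
      with hv₀
    have hval : ∀ i : K, ((∑ j ∈ U.attach, M i j.1 * v₀ j) - 1) ^ 2
        = if (∀ j ∈ U, gN j ≠ gK i) then 1 else 0 := by
      intro i
      by_cases hi : ∀ j ∈ U, gN j ≠ gK i
      · rw [if_pos hi]
        exact key v₀ i (by simpa [hD] using hi)
      · rw [if_neg hi]
        push_neg at hi
        obtain ⟨j₀, hj₀U, hj₀⟩ := hi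
        have hsum : ∑ j ∈ U.attach, M i j.1 * v₀ j = 1 := by
          have h1 : ∑ j ∈ U.attach, M i j.1 * v₀ j
              = ∑ j ∈ U, M i j * ((U.filter fun j' => gN j' = gN j).card : ℝ)⁻¹ := by
            rw [← Finset.sum_attach U (fun j => M i j * ((U.filter fun j' => gN j' = gN j).card : ℝ)⁻¹)]
          rw [h1]
          have h2 : ∀ j ∈ U, M i j * ((U.filter fun j' => gN j' = gN j).card : ℝ)⁻¹
              = if gK i = gN j then ((U.filter fun j' => gN j' = gK i).card : ℝ)⁻¹ else 0 := by
            intro j _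
            by_cases h : gK i = gN j
            · simp [hM, Matrix.of_apply, if_pos h, one_mul, ← h]
            · simp [hM, h]
          rw [Finset.sum_congr rfl h2, Finset.sum_ite, Finset.sum_const_zero, add_zero,
            Finset.sum_const, nsmul_eq_mul]
          have hcard : (U.filter fun j => gK i = gN j) = (U.filter fun j' => gN j' = gK i) := by
            apply Finset.filter_congr; intro j _; simp [eq_comm]
          rw [hcard]
          have hpos : 0 < (U.filter fun j' => gN j' = gK i).card :=
            Finset.card_pos.mpr ⟨j₀, Finset.mem_filter.mpr ⟨hj₀U, hj₀⟩⟩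
          field_simp
        rw [hsum]; norm_num
    calc sqErr M U ≤ ∑ i : K, ((∑ j ∈ U.attach, M i j.1 * v₀ j) - 1) ^ 2 :=
          ciInf_le hbdd v₀
      _ = (D.card : ℝ) := by
          rw [Finset.sum_congr rfl fun i _ => hval i, Finset.sum_boole, hD]
  · apply le_ciInf
    intro v
    calc (D.card : ℝ) = ∑ i ∈ D, ((∑ j ∈ U.attach, M i j.1 * v j) - 1) ^ 2 := by
          rw [Finset.sum_congr rfl (key v), Finset.sum_const, nsmul_eq_mul, mul_one]
      _ ≤ ∑ i : K, ((∑ j ∈ U.attach, M i j.1 * v j) - 1) ^ 2 :=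
          Finset.sum_le_sum_of_subset_of_nonneg (Finset.subset_univ D)
            fun i _ _ => sq_nonneg _

lemma fiber_card (t l : ℕ) (hl : 1 ≤ l) (g : ℕ) (hg : g < t) :
    (Finset.univ.filter fun i : Fin (t*l) => (i:ℕ)/l = g).card = l := by
  have h0 : 0 < l := hl
  conv_rhs => rw [← Finset.card_fin l]
  refine Finset.card_nbij' (fun i => (⟨(i:ℕ) % l, Nat.mod_lt _ h0⟩ : Fin l))
      (fun m => (⟨g*l + (m:ℕ), by
        have : g*l + (m:ℕ) < (g+1)*l := by have := m.2; nlinarith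
        have h2 : (g+1)*l ≤ t*l := Nat.mul_le_mul_right _ hg
        omega⟩ : Fin (t*l))) ?_ ?_ ?_ ?_
  · intro a _; exact Finset.mem_univ _
  · intro a _
    simp only [Finset.mem_coe, Finset.mem_filter, Finset.mem_univ, true_and]
    rw [mul_comm g l, Nat.mul_add_div h0, Nat.div_eq_of_lt a.2]
    omega
  · intro a ha
    simp only [Finset.mem_coe, Finset.mem_filter, Finset.mem_univ, true_and] at ha
    apply Fin.ext
    show g * l + (a:ℕ) % l = (a:ℕ)
    rw [← ha]
    exact Nat.div_add_mod' _ _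
  · intro a _
    apply Fin.ext
    simp only [mul_comm g l, Nat.mul_add_mod]
    exact Nat.mod_eq_of_lt a.2

lemma fiber_card_prod (t₁ l₁ t₂ l₂ : ℕ) (hl₁ : 1 ≤ l₁) (hl₂ : 1 ≤ l₂)
    (g : ℕ × ℕ) (hg₁ : g.1 < t₁) (hg₂ : g.2 < t₂) :
    (Finset.univ.filter fun i : Fin (t₁*l₁) × Fin (t₂*l₂) =>
      ((i.1:ℕ)/l₁, (i.2:ℕ)/l₂) = g).card = l₁ * l₂ := by
  have : (Finset.univ.filter fun i : Fin (t₁*l₁) × Fin (t₂*l₂) =>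
      ((i.1:ℕ)/l₁, (i.2:ℕ)/l₂) = g)
      = (Finset.univ.filter fun i : Fin (t₁*l₁) => (i:ℕ)/l₁ = g.1)
        ×ˢ (Finset.univ.filter fun i : Fin (t₂*l₂) => (i:ℕ)/l₂ = g.2) := by
    rw [← Finset.filter_product, ← Finset.univ_product_univ]
    apply Finset.filter_congr
    intro i _
    simp [Prod.ext_iff]
  rw [this, Finset.card_product, fiber_card _ _ hl₁ _ hg₁, fiber_card _ _ hl₂ _ hg₂]

lemma fiberwise_count (t₁ l₁ t₂ l₂ : ℕ) (hl₁ : 1 ≤ l₁) (hl₂ : 1 ≤ l₂)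
    (P : ℕ × ℕ → Prop) [DecidablePred P] :
    (Finset.univ.filter fun i : Fin (t₁*l₁) × Fin (t₂*l₂) =>
        P ((i.1:ℕ)/l₁, (i.2:ℕ)/l₂)).card
      = ((Finset.range t₁ ×ˢ Finset.range t₂).filter P).card * (l₁ * l₂) := by
  classical
  rw [Finset.card_eq_sum_card_fiberwise
    (f := fun i : Fin (t₁*l₁) × Fin (t₂*l₂) => ((i.1:ℕ)/l₁, (i.2:ℕ)/l₂))
    (t := (Finset.range t₁ ×ˢ Finset.range t₂).filter P)]
  · rw [Finset.sum_congr rfl (fun g hg => ?_), Finset.sum_const, smul_eq_mul]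
    have hg' := Finset.mem_filter.mp hg
    have hg1 := (Finset.mem_product.mp hg'.1).1
    have hg2 := (Finset.mem_product.mp hg'.1).2
    rw [Finset.mem_range] at hg1 hg2
    rw [Finset.filter_filter]
    have : (Finset.univ.filter fun i : Fin (t₁*l₁) × Fin (t₂*l₂) =>
        P ((i.1:ℕ)/l₁, (i.2:ℕ)/l₂) ∧ ((i.1:ℕ)/l₁, (i.2:ℕ)/l₂) = g)
        = Finset.univ.filter fun i => ((i.1:ℕ)/l₁, (i.2:ℕ)/l₂) = g := by
      apply Finset.filter_congr
      intro i _
      constructor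
      · exact fun h => h.2
      · intro h; exact ⟨h ▸ hg'.2, h⟩
    rw [this, fiber_card_prod _ _ _ _ hl₁ hl₂ g hg1 hg2]
  · intro i hi
    rw [Finset.mem_coe, Finset.mem_filter] at hi ⊢
    refine ⟨Finset.mem_product.mpr ⟨?_, ?_⟩, hi.2⟩
    · rw [Finset.mem_range]
      exact (Nat.div_lt_iff_lt_mul hl₁).mpr i.1.2
    · rw [Finset.mem_range]
      exact (Nat.div_lt_iff_lt_mul hl₂).mpr i.2.2

lemma sqErr_partition' {K N G : Type*} [Fintype K] [DecidableEq G] [DecidableEq K]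
    (gK : K → G) (gN : N → G) (U : Finset N) (P : G → Prop) [DecidablePred P]
    (hP : ∀ g, P g ↔ ∀ j ∈ U, gN j ≠ g) :
    sqErr (Matrix.of fun i j => if gK i = gN j then (1:ℝ) else 0) U
      = ((Finset.univ.filter fun i : K => P (gK i)).card : ℝ) := by
  rw [sqErr_partition gK gN U]
  norm_cast
  apply Finset.card_bij (fun a _ => a)
  · intro a ha
    rw [Finset.mem_filter] at ha ⊢
    exact ⟨ha.1, (hP _).mpr ha.2⟩
  · intro a _ b _ h
    exact h
  · intro b hb
    rw [Finset.mem_filter] at hb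
    exact ⟨b, Finset.mem_filter.mpr ⟨hb.1, (hP _).mp hb.2⟩, rfl⟩

/-- The set of groups all of whose columns are outside `U`. -/
def deadGroups (t₁ r₁ t₂ r₂ : ℕ) (U : Finset (Fin (t₁*r₁) × Fin (t₂*r₂))) : Finset (ℕ × ℕ) :=
  (Finset.range t₁ ×ˢ Finset.range t₂).filter
    (fun g => ∀ j ∈ U, ((j.1:ℕ)/r₁, (j.2:ℕ)/r₂) ≠ g)

lemma deadGroups_def (t₁ r₁ t₂ r₂ : ℕ) (U : Finset (Fin (t₁*r₁) × Fin (t₂*r₂))) :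
    deadGroups t₁ r₁ t₂ r₂ U = (Finset.range t₁ ×ˢ Finset.range t₂).filter
      (fun g => ∀ j ∈ U, ((j.1:ℕ)/r₁, (j.2:ℕ)/r₂) ≠ g) := rfl

lemma sqErr_FRCkron (t₁ l₁ r₁ t₂ l₂ r₂ : ℕ) (hl₁ : 1 ≤ l₁) (hl₂ : 1 ≤ l₂)
    (U : Finset (Fin (t₁*r₁) × Fin (t₂*r₂))) :
    sqErr (FRC t₁ l₁ r₁ ⊗ₖ FRC t₂ l₂ r₂) U
      = (((deadGroups t₁ r₁ t₂ r₂ U).card * (l₁ * l₂) : ℕ) : ℝ) := by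
  have hGM : (FRC t₁ l₁ r₁ ⊗ₖ FRC t₂ l₂ r₂)
      = Matrix.of (fun i j => if ((i.1:ℕ)/l₁, (i.2:ℕ)/l₂) = ((j.1:ℕ)/r₁, (j.2:ℕ)/r₂)
          then (1:ℝ) else 0) := by
    ext ⟨i₁, i₂⟩ ⟨j₁, j₂⟩
    simp only [Matrix.kroneckerMap_apply, FRC, Matrix.of_apply, Prod.mk.injEq]
    by_cases h1 : (i₁:ℕ)/l₁ = (j₁:ℕ)/r₁ <;> by_cases h2 : (i₂:ℕ)/l₂ = (j₂:ℕ)/r₂ <;>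
      simp [h1, h2]
  rw [hGM, sqErr_partition' (fun i : Fin (t₁*l₁) × Fin (t₂*l₂) => ((i.1:ℕ)/l₁, (i.2:ℕ)/l₂))
    (fun j : Fin (t₁*r₁) × Fin (t₂*r₂) => ((j.1:ℕ)/r₁, (j.2:ℕ)/r₂)) U
    (fun g => ∀ j ∈ U, ((j.1:ℕ)/r₁, (j.2:ℕ)/r₂) ≠ g) (fun g => Iff.rfl)]
  refine Nat.cast_inj.mpr ?_
  have h := fiberwise_count t₁ l₁ t₂ l₂ hl₁ hl₂
    (fun g => ∀ j ∈ U, ((j.1:ℕ)/r₁, (j.2:ℕ)/r₂) ≠ g)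
  rw [h, deadGroups_def]

lemma deadGroups_bound (t₁ r₁ t₂ r₂ : ℕ) (hr₁ : 1 ≤ r₁) (hr₂ : 1 ≤ r₂) (s : ℕ)
    (U : Finset (Fin (t₁*r₁) × Fin (t₂*r₂))) (hU : U.card = (t₁*r₁) * (t₂*r₂) - s)
    (hs : s ≤ (t₁*r₁) * (t₂*r₂)) :
    (deadGroups t₁ r₁ t₂ r₂ U).card ≤ s / (r₁*r₂) := by
  have hr : 0 < r₁ * r₂ := by positivity
  rw [Nat.le_div_iff_mul_le hr]
  have hCcard := fiberwise_count t₁ r₁ t₂ r₂ hr₁ hr₂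
    (fun g => ∀ j ∈ U, ((j.1:ℕ)/r₁, (j.2:ℕ)/r₂) ≠ g)
  have hd : ((Finset.range t₁ ×ˢ Finset.range t₂).filter
      (fun g => ∀ j ∈ U, ((j.1:ℕ)/r₁, (j.2:ℕ)/r₂) ≠ g)).card
      = (deadGroups t₁ r₁ t₂ r₂ U).card := by
    rw [deadGroups_def]
  rw [hd] at hCcard
  rw [← hCcard]
  have hsub : (Finset.univ.filter fun i : Fin (t₁*r₁) × Fin (t₂*r₂) =>
      ∀ j ∈ U, ((j.1:ℕ)/r₁, (j.2:ℕ)/r₂) ≠ ((i.1:ℕ)/r₁, (i.2:ℕ)/r₂)) ⊆ Uᶜ := by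
    intro j hj
    rw [Finset.mem_filter] at hj
    rw [Finset.mem_compl]
    intro hjU
    exact hj.2 j hjU rfl
  have h1 := Finset.card_le_card hsub
  have hUc : Uᶜ.card = s := by
    rw [Finset.card_compl, hU]
    have h2 : Fintype.card (Fin (t₁*r₁) × Fin (t₂*r₂)) = (t₁*r₁) * (t₂*r₂) := by simp
    omega
  omega

end helpers

/-- the Kronecker product of an `(n₁,k₁,l₁,r₁)`-FRC and an
`(n₂,k₂,l₂,r₂)`-FRC has normalized worst-case squared error
`(l₁l₂/(k₁k₂))·⌊s/(r₁r₂)⌋` for any `0 ≤ s ≤ n₁n₂`. -/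
theorem stmt8 (t₁ l₁ r₁ t₂ l₂ r₂ : ℕ)
    (hl₁ : 1 ≤ l₁) (hr₁ : 1 ≤ r₁) (hl₂ : 1 ≤ l₂) (hr₂ : 1 ≤ r₂)
    (s : ℕ) (hs : s ≤ (t₁ * r₁) * (t₂ * r₂)) :
    err (FRC t₁ l₁ r₁ ⊗ₖ FRC t₂ l₂ r₂) s
      = (((l₁ * l₂ : ℕ) : ℝ) / (((t₁ * l₁) * (t₂ * l₂) : ℕ) : ℝ)) *
          ((s / (r₁ * r₂) : ℕ) : ℝ) := by
  classical
  rcases Nat.eq_zero_or_pos (t₁ * t₂) with ht | ht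
  · -- degenerate case: no rows, no columns
    have hs0 : s = 0 := by
      have h0 : (t₁ * r₁) * (t₂ * r₂) = 0 := by
        rcases Nat.mul_eq_zero.mp ht with h | h <;> simp [h]
      omega
    subst hs0
    have hK : (t₁ * l₁) * (t₂ * l₂) = 0 := by
      rcases Nat.mul_eq_zero.mp ht with h | h <;> simp [h]
    rw [err]
    have : (Fintype.card (Fin (t₁*l₁) × Fin (t₂*l₂)) : ℝ) = 0 := by
      simp [Fintype.card_prod, ← Nat.cast_mul, hK]
    rw [this, hK]
    norm_num
  -- main case
  have ht₁ : 0 < t₁ := by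
    rcases Nat.eq_zero_or_pos t₁ with h | h
    · simp [h] at ht
    · exact h
  have ht₂ : 0 < t₂ := by
    rcases Nat.eq_zero_or_pos t₂ with h | h
    · simp [h] at ht
    · exact h
  have hr : 0 < r₁ * r₂ := by positivity
  -- the position map
  set p : Fin (t₁*r₁) × Fin (t₂*r₂) → ℕ := fun j =>
    (((j.1:ℕ)/r₁) * t₂ + (j.2:ℕ)/r₂) * (r₁*r₂) + (((j.1:ℕ)%r₁) * r₂ + (j.2:ℕ)%r₂) with hp
  have hwlt : ∀ j : Fin (t₁*r₁) × Fin (t₂*r₂),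
      ((j.1:ℕ)%r₁) * r₂ + (j.2:ℕ)%r₂ < r₁ * r₂ :=
    fun j => pack_lt (Nat.mod_lt _ hr₁) (Nat.mod_lt _ hr₂)
  have hglt : ∀ j : Fin (t₁*r₁) × Fin (t₂*r₂),
      ((j.1:ℕ)/r₁) * t₂ + (j.2:ℕ)/r₂ < t₁ * t₂ :=
    fun j => pack_lt ((Nat.div_lt_iff_lt_mul hr₁).mpr j.1.2)
      ((Nat.div_lt_iff_lt_mul hr₂).mpr j.2.2)
  have hplt : ∀ j, p j < (t₁*r₁) * (t₂*r₂) := by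
    intro j
    calc p j < (t₁*t₂) * (r₁*r₂) := pack_lt (hglt j) (hwlt j)
      _ = (t₁*r₁) * (t₂*r₂) := by ring
  have hpinj : Function.Injective p := by
    intro a b h
    simp only [hp] at h
    obtain ⟨hg, hw⟩ := pack_inj (hwlt a) (hwlt b) h
    obtain ⟨hg1, hg2⟩ := pack_inj (Nat.mod_lt _ hr₂) (Nat.mod_lt _ hr₂) hw
    obtain ⟨hd1, hd2⟩ := pack_inj ((Nat.div_lt_iff_lt_mul hr₂).mpr a.2.2)
      ((Nat.div_lt_iff_lt_mul hr₂).mpr b.2.2) hg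
    have e1 : (a.1:ℕ) = (b.1:ℕ) := by
      have ha := Nat.div_add_mod (a.1:ℕ) r₁
      have hb := Nat.div_add_mod (b.1:ℕ) r₁
      rw [hd1, hg1] at ha
      omega
    have e2 : (a.2:ℕ) = (b.2:ℕ) := by
      have ha := Nat.div_add_mod (a.2:ℕ) r₂
      have hb := Nat.div_add_mod (b.2:ℕ) r₂
      rw [hd2, hg2] at ha
      omega
    exact Prod.ext_iff.mpr ⟨Fin.ext e1, Fin.ext e2⟩
  have hpsurj : ∀ m < (t₁*r₁) * (t₂*r₂), ∃ j, p j = m := by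
    intro m hm
    have hm' : m < (t₁*t₂) * (r₁*r₂) := by
      calc m < (t₁*r₁) * (t₂*r₂) := hm
        _ = (t₁*t₂) * (r₁*r₂) := by ring
    set g := m / (r₁*r₂) with hg
    set w := m % (r₁*r₂) with hw
    have hgT : g < t₁ * t₂ := by
      rw [hg]
      exact Nat.div_lt_of_lt_mul (by linarith [hm'])
    have hwR : w < r₁ * r₂ := Nat.mod_lt _ hr
    have hg₁ : g / t₂ < t₁ := (Nat.div_lt_iff_lt_mul ht₂).mpr (by linarith [hgT])
    have hg₂ : g % t₂ < t₂ := Nat.mod_lt _ ht₂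
    have hw₁ : w / r₂ < r₁ := (Nat.div_lt_iff_lt_mul hr₂).mpr (by linarith [hwR])
    have hw₂ : w % r₂ < r₂ := Nat.mod_lt _ hr₂
    refine ⟨(⟨g / t₂ * r₁ + w / r₂, pack_lt hg₁ hw₁⟩, ⟨g % t₂ * r₂ + w % r₂, pack_lt hg₂ hw₂⟩), ?_⟩
    simp only [hp]
    rw [pack_div hw₁, pack_div hw₂, pack_mod hw₁, pack_mod hw₂,
      Nat.div_add_mod' g t₂, Nat.div_add_mod' w r₂]
    exact Nat.div_add_mod' m (r₁*r₂)
  -- the worst-case straggler set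
  set U₀ : Finset (Fin (t₁*r₁) × Fin (t₂*r₂)) :=
    Finset.univ.filter (fun j => s ≤ p j) with hU₀
  have hU₀card : U₀.card = (t₁*r₁) * (t₂*r₂) - s := by
    have hb : U₀.card = (Finset.Ico s ((t₁*r₁) * (t₂*r₂))).card := by
      apply Finset.card_bij (fun j _ => p j)
      · intro a ha
        rw [Finset.mem_Ico]
        exact ⟨(Finset.mem_filter.mp ha).2, hplt a⟩
      · intro a _ b _ h
        exact hpinj h
      · intro m hm
        rw [Finset.mem_Ico] at hm
        obtain ⟨j, hj⟩ := hpsurj m hm.2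
        exact ⟨j, Finset.mem_filter.mpr ⟨Finset.mem_univ _, hj ▸ hm.1⟩, hj⟩
    rw [hb, Nat.card_Ico]
  -- it kills at least ⌊s/(r₁r₂)⌋ groups
  have hC : s / (r₁*r₂) ≤ (deadGroups t₁ r₁ t₂ r₂ U₀).card := by
    set Gq : Finset (ℕ × ℕ) := (Finset.range t₁ ×ˢ Finset.range t₂).filter
      (fun g : ℕ × ℕ => g.1 * t₂ + g.2 < s / (r₁*r₂)) with hGq
    have hsub : Gq ⊆ deadGroups t₁ r₁ t₂ r₂ U₀ := by
      intro g hg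
      rw [hGq, Finset.mem_filter] at hg
      rw [deadGroups_def, Finset.mem_filter]
      refine ⟨hg.1, ?_⟩
      intro j hjU hgNj
      rw [hU₀, Finset.mem_filter] at hjU
      have hj1 : (j.1:ℕ)/r₁ = g.1 := congrArg Prod.fst hgNj
      have hj2 : (j.2:ℕ)/r₂ = g.2 := congrArg Prod.snd hgNj
      have hpj : p j = (g.1 * t₂ + g.2) * (r₁*r₂) + (((j.1:ℕ)%r₁) * r₂ + (j.2:ℕ)%r₂) := by
        simp only [hp, hj1, hj2]
      have h1 : p j < (g.1 * t₂ + g.2 + 1) * (r₁*r₂) := by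
        rw [hpj]
        calc (g.1 * t₂ + g.2) * (r₁*r₂) + (((j.1:ℕ)%r₁) * r₂ + (j.2:ℕ)%r₂)
            < (g.1 * t₂ + g.2) * (r₁*r₂) + (r₁*r₂) := Nat.add_lt_add_left (hwlt j) _
          _ = (g.1 * t₂ + g.2 + 1) * (r₁*r₂) := by ring
      have h2 : (g.1 * t₂ + g.2 + 1) * (r₁*r₂) ≤ (s / (r₁*r₂)) * (r₁*r₂) :=
        Nat.mul_le_mul_right _ hg.2
      have h3 : (s / (r₁*r₂)) * (r₁*r₂) ≤ s := Nat.div_mul_le_self _ _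
      have h4 : s ≤ p j := hjU.2
      omega
    have hGqcard : Gq.card = s / (r₁*r₂) := by
      have hqT : s / (r₁*r₂) ≤ t₁ * t₂ := by
        calc s / (r₁*r₂) ≤ ((t₁*t₂) * (r₁*r₂)) / (r₁*r₂) := by
              apply Nat.div_le_div_right
              calc s ≤ (t₁*r₁) * (t₂*r₂) := hs
                _ = (t₁*t₂) * (r₁*r₂) := by ring
          _ = t₁ * t₂ := Nat.mul_div_cancel _ hr
      have hb : Gq.card = (Finset.range (s / (r₁*r₂))).card := by
        apply Finset.card_bij (fun g _ => g.1 * t₂ + g.2)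
        · intro a ha
          rw [hGq, Finset.mem_filter] at ha
          rw [Finset.mem_range]
          exact ha.2
        · rintro ⟨a₁, a₂⟩ ha ⟨b₁, b₂⟩ hb h
          rw [hGq, Finset.mem_filter, Finset.mem_product, Finset.mem_range,
            Finset.mem_range] at ha hb
          obtain ⟨e1, e2⟩ := pack_inj ha.1.2 hb.1.2 h
          exact Prod.ext_iff.mpr ⟨e1, e2⟩
        · intro m hm
          rw [Finset.mem_range] at hm
          have hmT : m < t₁ * t₂ := lt_of_lt_of_le hm hqT
          refine ⟨(m / t₂, m % t₂), ?_, Nat.div_add_mod' m t₂⟩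
          rw [hGq, Finset.mem_filter, Finset.mem_product, Finset.mem_range, Finset.mem_range]
          refine ⟨⟨(Nat.div_lt_iff_lt_mul ht₂).mpr hmT, Nat.mod_lt _ ht₂⟩, ?_⟩
          rw [Nat.div_add_mod' m t₂]
          exact hm
      rw [hb, Finset.card_range]
    calc s / (r₁*r₂) = Gq.card := hGqcard.symm
      _ ≤ _ := Finset.card_le_card hsub
  -- assemble
  have hNcard : Fintype.card (Fin (t₁*r₁) × Fin (t₂*r₂)) = (t₁*r₁) * (t₂*r₂) := by simp
  have hU₀card' : U₀.card = Fintype.card (Fin (t₁*r₁) × Fin (t₂*r₂)) - s := by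
    rw [hNcard]; exact hU₀card
  have hne : Nonempty {U : Finset (Fin (t₁*r₁) × Fin (t₂*r₂)) //
      U.card = Fintype.card (Fin (t₁*r₁) × Fin (t₂*r₂)) - s} := ⟨⟨U₀, hU₀card'⟩⟩
  have hsup : (⨆ U : {U : Finset (Fin (t₁*r₁) × Fin (t₂*r₂)) //
        U.card = Fintype.card (Fin (t₁*r₁) × Fin (t₂*r₂)) - s},
        sqErr (FRC t₁ l₁ r₁ ⊗ₖ FRC t₂ l₂ r₂) U.1)
      = (((s / (r₁*r₂)) * (l₁ * l₂) : ℕ) : ℝ) := by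
    apply le_antisymm
    · apply ciSup_le
      intro U
      rw [sqErr_FRCkron t₁ l₁ r₁ t₂ l₂ r₂ hl₁ hl₂ U.1]
      have hU : U.1.card = (t₁*r₁) * (t₂*r₂) - s := by
        rw [U.2, hNcard]
      exact_mod_cast Nat.mul_le_mul_right (l₁*l₂)
        (deadGroups_bound t₁ r₁ t₂ r₂ hr₁ hr₂ s U.1 hU hs)
    · have hle := le_ciSup (f := fun U : {U : Finset (Fin (t₁*r₁) × Fin (t₂*r₂)) //
          U.card = Fintype.card (Fin (t₁*r₁) × Fin (t₂*r₂)) - s} =>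
          sqErr (FRC t₁ l₁ r₁ ⊗ₖ FRC t₂ l₂ r₂) U.1)
        (Set.Finite.bddAbove (Set.finite_range _)) ⟨U₀, hU₀card'⟩
      refine le_trans ?_ hle
      rw [sqErr_FRCkron t₁ l₁ r₁ t₂ l₂ r₂ hl₁ hl₂ U₀]
      have hDg : (deadGroups t₁ r₁ t₂ r₂ U₀).card = s / (r₁*r₂) :=
        le_antisymm (deadGroups_bound t₁ r₁ t₂ r₂ hr₁ hr₂ s U₀ hU₀card hs) hC
      rw [hDg]
  rw [err, hsup]
  have hk : (Fintype.card (Fin (t₁*l₁) × Fin (t₂*l₂)) : ℝ)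
      = (((t₁*l₁) * (t₂*l₂) : ℕ) : ℝ) := by simp
  rw [hk]
  push_cast
  ring
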